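/- Let g ∈ GL(V) be an element of finite order d, where V is an n-dimensional complex vector space. If there is a constant C such that every eigenvalue α of g satisfies [ℚ(α):ℚ] ≤ C, then d ≤ 2^n · C^(2n). -/

import Mathlib

open Nat in
theorem aux_totient (m : ℕ) (hm : 0 < m) :
    m ≤ 2 * m.totient ^ 2 ∧ (Odd m → m ≤ m.totient ^ 2) := by
  induction m using Nat.recOnPosPrimePosCoprime with
  | zero => omega
  | one => simp
  | prime_pow p k hp hk =>
    rw [Nat.totient_prime_pow hp hk]
    rcases eq_or_ne p 2 with rfl | hp2
    · constructor
      · calc 2 ^ k ≤ 2 * (2 ^ (k-1)) ^ 2 := by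
              rw [← pow_mul, ← Nat.pow_succ']
              exact Nat.pow_le_pow_right (by norm_num) (by omega)
            _ = 2 * (2 ^ (k-1) * (2 - 1)) ^ 2 := by norm_num
      · intro h
        exact absurd h ((fun he ho => (Nat.not_odd_iff_even.mpr he) ho) (Nat.even_pow.mpr ⟨even_iff_two_dvd.mpr dvd_rfl, hk.ne'⟩))
    · have hp3 : 3 ≤ p := by
        have := hp.two_le; omega
      have key : p ^ k ≤ (p ^ (k - 1) * (p - 1)) ^ 2 := by
        have h1 : p ≤ (p - 1) ^ 2 := by
          zify [show 1 ≤ p by omega]; nlinarith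
        calc p ^ k = p ^ (k - 1) * p := by rw [← pow_succ]; congr 1; omega
          _ ≤ p ^ (k-1) * (p-1)^2 := Nat.mul_le_mul_left _ h1
          _ ≤ p ^ (k-1) * p ^ (k-1) * (p-1)^2 :=
              Nat.mul_le_mul_right _ (Nat.le_mul_of_pos_left _ (Nat.pow_pos hp.pos))
          _ = (p ^ (k - 1) * (p - 1)) ^ 2 := by ring
      exact ⟨key.trans (by omega), fun _ => key⟩
  | coprime a b ha hb hab iha ihb =>
    have Ha := iha (by omega)
    have Hb := ihb (by omega)
    rw [Nat.totient_mul hab]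
    constructor
    · rcases Nat.even_or_odd a with hae | hao
      · have hbo : Odd b := by
          rcases Nat.even_or_odd b with hbe | hbo
          · exfalso
            have : (2:ℕ) ∣ Nat.gcd a b := Nat.dvd_gcd hae.two_dvd hbe.two_dvd
            rw [hab] at this; omega
          · exact hbo
        calc a * b ≤ (2 * a.totient ^ 2) * (b.totient ^ 2) :=
              Nat.mul_le_mul Ha.1 (Hb.2 hbo)
          _ = 2 * (a.totient * b.totient) ^ 2 := by ring
      · calc a * b ≤ a.totient ^ 2 * (2 * b.totient ^ 2) :=
              Nat.mul_le_mul (Ha.2 hao) Hb.1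
          _ = 2 * (a.totient * b.totient) ^ 2 := by ring
    · intro hab_odd
      rw [Nat.odd_mul] at hab_odd
      calc a * b ≤ a.totient ^ 2 * b.totient ^ 2 :=
            Nat.mul_le_mul (Ha.2 hab_odd.1) (Hb.2 hab_odd.2)
        _ = (a.totient * b.totient) ^ 2 := by ring

open Polynomial in
theorem bounded_element_order (V : Type*) [AddCommGroup V] [Module ℂ V]
    [FiniteDimensional ℂ V] (n : ℕ) (hn : 1 ≤ n) (hdim : Module.finrank ℂ V = n)
    (g : V ≃ₗ[ℂ] V) (d C : ℕ) (hd : 0 < d) (hord : orderOf g = d)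
    (hC : ∀ α : ℂ, Module.End.HasEigenvalue (↑g : V →ₗ[ℂ] V) α →
      Module.finrank ℚ ↥(IntermediateField.adjoin ℚ {α}) ≤ C) :
    d ≤ 2 ^ n * C ^ (2 * n) := by
  have hV : Nontrivial V := Module.nontrivial_of_finrank_pos (R := ℂ) (by omega)
  set f : V →ₗ[ℂ] V := (g : V →ₗ[ℂ] V) with hf
  have coe_pow : ∀ k : ℕ, ((g ^ k : V ≃ₗ[ℂ] V) : V →ₗ[ℂ] V) = f ^ k := fun k =>
    map_pow LinearEquiv.automorphismGroup.toLinearMapMonoidHom g k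
  have coe_one : ((1 : V ≃ₗ[ℂ] V) : V →ₗ[ℂ] V) = 1 :=
    map_one LinearEquiv.automorphismGroup.toLinearMapMonoidHom
  have hfd : f ^ d = 1 := by
    have h1 : g ^ d = 1 := by rw [← hord]; exact pow_orderOf_eq_one g
    rw [← coe_pow, h1, coe_one]
  have hint : IsIntegral ℂ f := f.isIntegral
  set μ := minpoly ℂ f with hμ
  have hdvd : μ ∣ X ^ d - 1 := minpoly.dvd ℂ f (by
    simp [map_sub, map_pow, aeval_X, hfd])
  have hXd0 : (X ^ d - 1 : ℂ[X]) ≠ 0 := by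
    have := (monic_X_pow_sub_C (1 : ℂ) hd.ne').ne_zero
    simpa using this
  have hsep : Separable (X ^ d - 1 : ℂ[X]) :=
    (X_pow_sub_one_separable_iff).mpr (by
      exact_mod_cast (Nat.cast_ne_zero (R := ℂ)).mpr hd.ne')
  have hnodupXd : (X ^ d - 1 : ℂ[X]).roots.Nodup := nodup_roots hsep
  have hnodup : μ.roots.Nodup :=
    Multiset.nodup_of_le (roots.le_of_dvd hXd0 hdvd) hnodupXd
  have hμ0 : μ ≠ 0 := minpoly.ne_zero hint
  have hmonic : μ.Monic := minpoly.monic hint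
  -- every root of μ satisfies α ^ d = 1
  have hroot_pow : ∀ α ∈ μ.roots, α ^ d = 1 := by
    intro α hα
    have : α ∈ (X ^ d - 1 : ℂ[X]).roots := Multiset.subset_of_le (roots.le_of_dvd hXd0 hdvd) hα
    have h2 := (mem_roots hXd0).mp this
    simpa [IsRoot, sub_eq_zero] using h2
  set S : Finset ℂ := μ.roots.toFinset with hS
  have horder_dvd : ∀ α ∈ S, orderOf α ∣ d := by
    intro α hα
    exact orderOf_dvd_of_pow_eq_one (hroot_pow α (Multiset.mem_toFinset.mp hα))
  have horder_pos : ∀ α ∈ S, 0 < orderOf α := fun α hα =>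
    Nat.pos_of_dvd_of_pos (horder_dvd α hα) hd
  set m := S.lcm orderOf with hm
  have hm_dvd_d : m ∣ d := Finset.lcm_dvd horder_dvd
  have hm_pos : 0 < m := Nat.pos_of_dvd_of_pos hm_dvd_d hd
  -- μ divides X^m - 1
  have hXm0 : (X ^ m - 1 : ℂ[X]) ≠ 0 := by
    have := (monic_X_pow_sub_C (1 : ℂ) hm_pos.ne').ne_zero
    simpa using this
  have hroots_le : μ.roots ≤ (X ^ m - 1 : ℂ[X]).roots := by
    rw [Multiset.le_iff_subset hnodup]
    intro α hα
    have hαm : α ^ m = 1 := by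
      have : orderOf α ∣ m := Finset.dvd_lcm (Multiset.mem_toFinset.mpr hα)
      obtain ⟨c, hc⟩ := this
      rw [hc, pow_mul, pow_orderOf_eq_one, one_pow]
    rw [mem_roots hXm0]
    simp [IsRoot, hαm]
  have hsplits : μ.Splits := IsAlgClosed.splits μ
  have hμ_eq : (μ.roots.map fun a => X - Polynomial.C a).prod = μ :=
    prod_multiset_X_sub_C_of_monic_of_roots_card_eq hmonic
      (splits_iff_card_roots.mp hsplits)
  have hμ_dvd_Xm : μ ∣ X ^ m - 1 := by
    rw [← hμ_eq]
    exact (Multiset.prod_dvd_prod_of_le (Multiset.map_le_map hroots_le)).trans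
      (prod_multiset_X_sub_C_dvd _)
  -- hence f ^ m = 1 and d ∣ m
  have hfm : f ^ m = 1 := by
    obtain ⟨q, hq⟩ := hμ_dvd_Xm
    have : aeval f (X ^ m - 1 : ℂ[X]) = 0 := by
      rw [hq, map_mul, minpoly.aeval, zero_mul]
    have h2 : f ^ m - 1 = 0 := by simpa [map_sub, map_pow] using this
    rw [sub_eq_zero] at h2; exact h2
  have hgm : g ^ m = 1 := by
    apply LinearEquiv.toLinearMap_injective
    rw [coe_pow, coe_one] at *
    exact hfm
  have hd_dvd_m : d ∣ m := hord ▸ orderOf_dvd_of_pow_eq_one hgm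
  have hd_le_m : d ≤ m := Nat.le_of_dvd hm_pos hd_dvd_m
  -- eigenvalue degree bound : orderOf α ≤ 2 * C ^ 2, and 1 ≤ C
  have hkey : ∀ α ∈ S, Nat.totient (orderOf α) ≤ C := by
    intro α hα
    have hαe : Module.End.HasEigenvalue f α := by
      rw [Module.End.hasEigenvalue_iff_isRoot]
      exact isRoot_of_mem_roots (Multiset.mem_toFinset.mp hα)
    have hCα := hC α hαe
    have hk : 0 < orderOf α := horder_pos α hα
    have hprim : IsPrimitiveRoot α (orderOf α) := IsPrimitiveRoot.orderOf α
    have hmin : cyclotomic (orderOf α) ℚ = minpoly ℚ α :=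
      cyclotomic_eq_minpoly_rat hprim hk
    have hintα : IsIntegral ℚ α := by
      refine ⟨X ^ orderOf α - 1, monic_X_pow_sub_C _ hk.ne', ?_⟩
      simp [sub_eq_zero, pow_orderOf_eq_one]
    have hfr : Module.finrank ℚ ↥(IntermediateField.adjoin ℚ {α})
        = (orderOf α).totient := by
      rw [IntermediateField.adjoin.finrank hintα, ← hmin, natDegree_cyclotomic]
    rw [hfr] at hCα
    exact hCα
  have hSne : S.Nonempty := by
    have hdeg : 0 < μ.natDegree := minpoly.natDegree_pos hint
    have hcard : Multiset.card μ.roots = μ.natDegree := splits_iff_card_roots.mp hsplits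
    rcases Multiset.card_pos_iff_exists_mem.mp (hcard ▸ hdeg) with ⟨α, hα⟩
    exact ⟨α, Multiset.mem_toFinset.mpr hα⟩
  have hC1 : 1 ≤ C := by
    obtain ⟨α, hα⟩ := hSne
    have := hkey α hα
    have := Nat.totient_pos.mpr (horder_pos α hα)
    omega
  have hbound : ∀ α ∈ S, orderOf α ≤ 2 * C ^ 2 := by
    intro α hα
    have h1 := (aux_totient (orderOf α) (horder_pos α hα)).1
    have h2 := hkey α hα
    calc orderOf α ≤ 2 * (orderOf α).totient ^ 2 := h1
      _ ≤ 2 * C ^ 2 := by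
          have := Nat.pow_le_pow_left h2 2
          omega
  -- card bound
  have hcard_le : S.card ≤ n := by
    have h1 : S.card ≤ Multiset.card μ.roots := Multiset.toFinset_card_le _
    have h2 : Multiset.card μ.roots = μ.natDegree := splits_iff_card_roots.mp hsplits
    have h3 : μ.natDegree ≤ f.charpoly.natDegree :=
      natDegree_le_of_dvd (LinearMap.minpoly_dvd_charpoly f) (f.charpoly_monic.ne_zero)
    have h4 : f.charpoly.natDegree = n := by rw [f.charpoly_natDegree, hdim]
    omega
  -- finish
  have hm_le : m ≤ (2 * C ^ 2) ^ n := by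
    have hP : m ∣ ∏ α ∈ S, orderOf α :=
      Finset.lcm_dvd fun α hα => Finset.dvd_prod_of_mem _ hα
    have hPpos : 0 < ∏ α ∈ S, orderOf α := Finset.prod_pos horder_pos
    have h5 : m ≤ ∏ α ∈ S, orderOf α := Nat.le_of_dvd hPpos hP
    have h6 : ∏ α ∈ S, orderOf α ≤ (2 * C ^ 2) ^ S.card :=
      Finset.prod_le_pow_card S _ _ hbound
    have h7 : (2 * C ^ 2) ^ S.card ≤ (2 * C ^ 2) ^ n :=
      Nat.pow_le_pow_right (by nlinarith) hcard_le
    omega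
  calc d ≤ m := hd_le_m
    _ ≤ (2 * C ^ 2) ^ n := hm_le
    _ = 2 ^ n * C ^ (2 * n) := by rw [mul_pow, ← pow_mul]
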